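/- Let H be a cyclic group of order n, where n ≥ 3 is an integer. Every sequence T over H of length |T| = n−1 that contains no short zero-sum subsequence has the form T = g^{n−1} where g ∈ H with ord(g) = n. -/

import Mathlib

open Multiset

/-- A zero-sum-free sequence of length ℓ has at least ℓ+1 distinct subset sums
(including the empty sum 0). -/
lemma subsums_card_aux {H : Type*} [AddCommGroup H] [DecidableEq H] (S : Multiset H)
    (hS : ∀ U : Multiset H, U ≤ S → U ≠ 0 → U.sum ≠ 0) :
    Multiset.card S + 1 ≤ ((S.powerset.map Multiset.sum).toFinset).card := by
  induction S using Multiset.induction with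
  | empty => simp
  | cons a S ih =>
    have hS' : ∀ U : Multiset H, U ≤ S → U ≠ 0 → U.sum ≠ 0 := fun U hU h0 =>
      hS U (hU.trans (Multiset.le_cons_self S a)) h0
    have hA := ih hS'
    set A : Finset H := (S.powerset.map Multiset.sum).toFinset with hAdef
    have hsubset : insert 0 (A.image (a + ·)) ⊆
        (((a ::ₘ S).powerset.map Multiset.sum).toFinset) := by
      intro x hx
      simp only [Finset.mem_insert, Finset.mem_image, hAdef, Multiset.mem_toFinset,
        Multiset.mem_map, Multiset.mem_powerset] at hx ⊢
      rcases hx with rfl | ⟨y, ⟨U, hU, rfl⟩, rfl⟩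
      · exact ⟨0, by simp⟩
      · exact ⟨a ::ₘ U, Multiset.cons_le_cons a hU, by simp⟩
    have h0notmem : (0 : H) ∉ A.image (a + ·) := by
      simp only [Finset.mem_image, hAdef, Multiset.mem_toFinset, Multiset.mem_map,
        Multiset.mem_powerset]
      rintro ⟨y, ⟨U, hU, rfl⟩, hsum⟩
      exact hS (a ::ₘ U) (Multiset.cons_le_cons a hU) (Multiset.cons_ne_zero) (by simpa using hsum)
    have hcard : (insert 0 (A.image (a + ·))).card = A.card + 1 := by
      rw [Finset.card_insert_of_notMem h0notmem,
        Finset.card_image_of_injective _ (add_right_injective a)]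
    have := Finset.card_le_card hsubset
    rw [hcard] at this
    simp only [Multiset.card_cons]
    omega

theorem stmt_7 (n : ℕ) (hn : 3 ≤ n) (H : Type*) [AddCommGroup H] [Fintype H]
    (hcyc : IsAddCyclic H) (hcardH : Fintype.card H = n)
    (T : Multiset H) (hT : Multiset.card T = n - 1)
    (h : ¬ ∃ U : Multiset H, U ≤ T ∧ U ≠ 0 ∧ Multiset.card U ≤ n ∧ U.sum = 0) :
    ∃ g : H, addOrderOf g = n ∧ T = Multiset.replicate (n - 1) g := by
  classical
  push_neg at h
  -- T is zero-sum free
  have hzsf : ∀ U : Multiset H, U ≤ T → U ≠ 0 → U.sum ≠ 0 := by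
    intro U hU h0
    have hcU : Multiset.card U ≤ n - 1 := hT ▸ Multiset.card_le_card hU
    exact h U hU h0 (by omega)
  -- 0 ∉ T
  have h0T : (0 : H) ∉ T := by
    intro h0
    exact hzsf {0} (Multiset.singleton_le.mpr h0) (by simp) (by simp)
  -- T is nonempty
  have hTne : T ≠ 0 := by
    intro h0
    rw [h0] at hT
    simp at hT
    omega
  obtain ⟨g, hg⟩ := Multiset.exists_mem_of_ne_zero hTne
  -- all elements of T are equal to g
  have hall : ∀ x ∈ T, x = g := by
    intro x hx
    by_contra hne
    -- T = g ::ₘ x ::ₘ R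
    have hx' : x ∈ T.erase g := (Multiset.mem_erase_of_ne hne).mpr hx
    set R : Multiset H := (T.erase g).erase x with hRdef
    have hTeq : T = g ::ₘ x ::ₘ R := by
      rw [hRdef, Multiset.cons_erase hx', Multiset.cons_erase hg]
    have hcardR : Multiset.card R = n - 3 := by
      have := congrArg Multiset.card hTeq
      simp only [Multiset.card_cons] at this
      omega
    -- R is zero-sum free
    have hRzsf : ∀ U : Multiset H, U ≤ R → U ≠ 0 → U.sum ≠ 0 := by
      intro U hU h0
      refine hzsf U ?_ h0
      rw [hTeq]
      exact hU.trans ((Multiset.le_cons_self R x).trans (Multiset.le_cons_self _ g))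
    have hg0 : g ≠ 0 := fun hh => h0T (hh ▸ hg)
    have hx0 : x ≠ 0 := fun hh => h0T (hh ▸ hx)
    -- subset sums of R avoid -g, -x, -(g+x)
    set A : Finset H := (R.powerset.map Multiset.sum).toFinset with hAdef
    have hAsub : A ⊆ Finset.univ \ {-g, -x, -(g + x)} := by
      intro y hy
      simp only [hAdef, Multiset.mem_toFinset, Multiset.mem_map, Multiset.mem_powerset] at hy
      obtain ⟨U, hU, rfl⟩ := hy
      simp only [Finset.mem_sdiff, Finset.mem_univ, true_and, Finset.mem_insert,
        Finset.mem_singleton]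
      push_neg
      refine ⟨?_, ?_, ?_⟩
      · intro hsum
        refine hzsf (g ::ₘ U) ?_ (Multiset.cons_ne_zero) (by simp [hsum])
        rw [hTeq]
        exact Multiset.cons_le_cons g (hU.trans (Multiset.le_cons_self R x))
      · intro hsum
        refine hzsf (x ::ₘ U) ?_ (Multiset.cons_ne_zero) (by simp [hsum])
        rw [hTeq]
        exact (Multiset.cons_le_cons x hU).trans (Multiset.le_cons_self _ g)
      · intro hsum
        refine hzsf (g ::ₘ x ::ₘ U) ?_ (Multiset.cons_ne_zero) ?_
        · rw [hTeq]
          exact Multiset.cons_le_cons g (Multiset.cons_le_cons x hU)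
        · simp [hsum]
    -- cardinality contradiction
    have hdist1 : (-g : H) ≠ -x := fun hh => hne (by simpa using (neg_injective hh).symm)
    have hdist2 : (-g : H) ≠ -(g + x) := by
      intro hh
      apply hx0
      have h2 := neg_injective hh
      rwa [left_eq_add] at h2
    have hdist3 : (-x : H) ≠ -(g + x) := by
      intro hh
      apply hg0
      have h2 := neg_injective hh
      rwa [right_eq_add] at h2
    have hcard3 : ({-g, -x, -(g + x)} : Finset H).card = 3 := by
      rw [Finset.card_insert_of_notMem (by simp [hdist1, hdist2, hx0, hg0]),
        Finset.card_insert_of_notMem (by simp [hdist3, hx0, hg0])]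
      simp
    have hcardA : A.card ≤ n - 3 := by
      have := Finset.card_le_card hAsub
      rw [Finset.card_sdiff_of_subset (Finset.subset_univ _), Finset.card_univ, hcardH, hcard3] at this
      exact this
    have hge := subsums_card_aux R hRzsf
    rw [← hAdef, hcardR] at hge
    omega
  -- order of g is n
  have hord : addOrderOf g = n := by
    have hdvd : addOrderOf g ∣ n := hcardH ▸ addOrderOf_dvd_card
    have hpos : 0 < addOrderOf g := addOrderOf_pos g
    by_contra hne
    have hlt : addOrderOf g < n := lt_of_le_of_ne (Nat.le_of_dvd (by omega) hdvd) hne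
    have hcount : Multiset.count g T = n - 1 := by
      rw [Multiset.count_eq_card.mpr (fun b hb => (hall b hb).symm), hT]
    have hrep : Multiset.replicate (addOrderOf g) g ≤ T :=
      Multiset.le_count_iff_replicate_le.mp (by omega)
    refine hzsf _ hrep ?_ ?_
    · intro h0
      have := congrArg Multiset.card h0
      simp only [Multiset.card_replicate, Multiset.card_zero] at this
      omega
    · simp [Multiset.sum_replicate, addOrderOf_nsmul_eq_zero]
  refine ⟨g, hord, ?_⟩
  rw [Multiset.eq_replicate]
  exact ⟨hT, hall⟩
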